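/- Let H be a complex Hilbert space and let A, B be bounded linear operators on H such that A B* = 0 and B* A = 0 (where X* denotes the Hilbert-space adjoint). Then ‖A + B‖ = max(‖A‖, ‖B‖), where ‖·‖ is the operator norm. -/

import Mathlib

open ContinuousLinearMap
open scoped InnerProductSpace

/-- If `A B* = 0` and `B* A = 0`, then `‖A + B‖ = max ‖A‖ ‖B‖`. -/
theorem norm_add_eq_max_of_mul_adjoint_eq_zero
    {H : Type*} [NormedAddCommGroup H] [InnerProductSpace ℂ H] [CompleteSpace H]
    (A B : H →L[ℂ] H)
    (h₁ : A ∘L ContinuousLinearMap.adjoint B = 0)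
    (h₂ : ContinuousLinearMap.adjoint B ∘L A = 0) :
    ‖A + B‖ = max ‖A‖ ‖B‖ := by
  have hBA' : B ∘L ContinuousLinearMap.adjoint A = 0 := by
    have := congrArg ContinuousLinearMap.adjoint h₁
    simpa [adjoint_comp, adjoint_adjoint] using this
  have hAB' : ContinuousLinearMap.adjoint A ∘L B = 0 := by
    have := congrArg ContinuousLinearMap.adjoint h₂
    simpa [adjoint_comp, adjoint_adjoint] using this
  have hpyth : ∀ ξ : H, ‖(A + B) ξ‖ ^ 2 = ‖A ξ‖ ^ 2 + ‖B ξ‖ ^ 2 := by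
    intro ξ
    have hinner : ⟪A ξ, B ξ⟫_ℂ = 0 := by
      have h0 : ContinuousLinearMap.adjoint A (B ξ) = 0 := by
        have := congrFun (congrArg DFunLike.coe hAB') ξ
        simpa using this
      have h := ContinuousLinearMap.adjoint_inner_right A ξ (B ξ)
      rw [h0] at h
      simpa using h.symm
    have := norm_add_sq_eq_norm_sq_add_norm_sq_of_inner_eq_zero (A ξ) (B ξ) hinner
    simpa [pow_two] using this
  -- lower bounds
  have hle : max ‖A‖ ‖B‖ ≤ ‖A + B‖ := by
    have key : ∀ (T : H →L[ℂ] H), (∀ ξ, ‖T ξ‖ ≤ ‖(A + B) ξ‖) → ‖T‖ ≤ ‖A + B‖ := by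
      intro T hT
      refine ContinuousLinearMap.opNorm_le_bound _ (norm_nonneg _) fun ξ => ?_
      exact (hT ξ).trans ((A + B).le_opNorm ξ)
    refine max_le (key A fun ξ => ?_) (key B fun ξ => ?_)
    · have := hpyth ξ
      nlinarith [norm_nonneg (B ξ), norm_nonneg ((A+B) ξ), norm_nonneg (A ξ)]
    · have := hpyth ξ
      nlinarith [norm_nonneg (A ξ), norm_nonneg ((A+B) ξ), norm_nonneg (B ξ)]
  -- upper bound
  have hge : ‖A + B‖ ≤ max ‖A‖ ‖B‖ := by
    set K : Submodule ℂ H := LinearMap.ker (B : H →ₗ[ℂ] H) with hK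
    refine ContinuousLinearMap.opNorm_le_bound _
      (le_trans (norm_nonneg A) (le_max_left _ _)) fun ξ => ?_
    set p : H := (K.orthogonalProjectionOnto ξ : H) with hp
    have hpK : p ∈ K := (K.orthogonalProjectionOnto ξ).2
    have hq : ξ - p ∈ Kᗮ := by
      have := Submodule.sub_starProjection_mem_orthogonal (K := K) ξ
      rw [Submodule.starProjection_apply] at this
      exact this
    have hBp : B p = 0 := hpK
    have hBξ : B ξ = B (ξ - p) := by rw [map_sub, hBp, sub_zero]
    have hAq : A (ξ - p) = 0 := by
      rw [← @inner_self_eq_zero ℂ]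
      have h0 : ContinuousLinearMap.adjoint A (A (ξ - p)) ∈ K := by
        show B (ContinuousLinearMap.adjoint A (A (ξ - p))) = 0
        have := congrFun (congrArg DFunLike.coe hBA') (A (ξ - p))
        simpa using this
      calc ⟪A (ξ - p), A (ξ - p)⟫_ℂ
          = ⟪ξ - p, ContinuousLinearMap.adjoint A (A (ξ - p))⟫_ℂ := by
            rw [ContinuousLinearMap.adjoint_inner_right]
        _ = 0 := inner_eq_zero_symm.mp (hq _ h0)
    have hAξ : A ξ = A p := by
      have : A ξ - A p = 0 := by rw [← map_sub]; exact hAq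
      exact sub_eq_zero.mp this
    -- pythagoras for ξ
    have hξsq : ‖p‖ ^ 2 + ‖ξ - p‖ ^ 2 = ‖ξ‖ ^ 2 := by
      have hin : ⟪p, ξ - p⟫_ℂ = 0 := hq p hpK
      have := norm_add_sq_eq_norm_sq_add_norm_sq_of_inner_eq_zero p (ξ - p) hin
      simp only [add_sub_cancel] at this
      simpa [pow_two] using this.symm ▸ this
    set M : ℝ := max ‖A‖ ‖B‖ with hM
    have hM0 : 0 ≤ M := le_trans (norm_nonneg A) (le_max_left _ _)
    have hAle : ‖A ξ‖ ≤ M * ‖p‖ := by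
      rw [hAξ]
      exact (A.le_opNorm p).trans (by
        have := mul_le_mul_of_nonneg_right (le_max_left ‖A‖ ‖B‖) (norm_nonneg p)
        linarith)
    have hBle : ‖B ξ‖ ≤ M * ‖ξ - p‖ := by
      rw [hBξ]
      exact (B.le_opNorm (ξ - p)).trans (by
        have := mul_le_mul_of_nonneg_right (le_max_right ‖A‖ ‖B‖) (norm_nonneg (ξ - p))
        linarith)
    have sA : ‖A ξ‖ ^ 2 ≤ M ^ 2 * ‖p‖ ^ 2 := by
      nlinarith [norm_nonneg (A ξ), mul_nonneg hM0 (norm_nonneg p)]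
    have sB : ‖B ξ‖ ^ 2 ≤ M ^ 2 * ‖ξ - p‖ ^ 2 := by
      nlinarith [norm_nonneg (B ξ), mul_nonneg hM0 (norm_nonneg (ξ - p))]
    have hsq : ‖(A + B) ξ‖ ^ 2 ≤ (M * ‖ξ‖) ^ 2 := by
      have h1 := hpyth ξ
      nlinarith [sA, sB, hξsq]
    exact (pow_le_pow_iff_left₀ (norm_nonneg _) (mul_nonneg hM0 (norm_nonneg ξ)) two_ne_zero).mp hsq
  exact le_antisymm hge hle
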